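/- Let T > 0 with sin T ≠ 0, let x : ℝ → ℝ be continuous and T-periodic, and let χ : ℝ → ℝ be a twice continuously differentiable, even, T-periodic function satisfying χ''(t) + χ(t) = x(t) for all t ∈ ℝ. Then χ(0) = (1 / sin T) · ∫₀ᵀ cos(T − t)·x(t) dt. -/

import Mathlib

open Real

/-- The initial value of an even `T`-periodic solution of `χ'' + χ = x` is given by
`χ(0) = (1 / sin T) ∫₀ᵀ cos(T − t) x(t) dt` when `sin T ≠ 0`. -/
theorem even_periodic_solution_initial_value
    (T : ℝ) (hT : 0 < T) (hsin : Real.sin T ≠ 0)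
    (x : ℝ → ℝ) (hx : Continuous x) (hxper : ∀ t : ℝ, x (t + T) = x t)
    (χ : ℝ → ℝ) (hχ : ContDiff ℝ 2 χ)
    (hχeven : ∀ t : ℝ, χ (-t) = χ t)
    (hχper : ∀ t : ℝ, χ (t + T) = χ t)
    (hode : ∀ t : ℝ, deriv (deriv χ) t + χ t = x t) :
    χ 0 = (1 / Real.sin T) * ∫ t in (0:ℝ)..T, Real.cos (T - t) * x t := by
  -- differentiability facts
  have hχd : Differentiable ℝ χ := hχ.differentiable (by norm_num)
  have hχ' : ContDiff ℝ 1 (deriv χ) := by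
    have := (contDiff_succ_iff_deriv (n := 1)).mp (by exact_mod_cast hχ)
    exact this.2.2
  have hχ'd : Differentiable ℝ (deriv χ) := hχ'.differentiable (by norm_num)
  -- χ'(0) = 0 by evenness
  have hderiv0 : deriv χ 0 = 0 := by
    have h1 : (fun t => χ (-t)) = χ := funext hχeven
    have h2 : deriv (fun t => χ (-t)) 0 = -deriv χ 0 := by
      have := ((hχd (-(0:ℝ))).hasDerivAt.comp 0 (hasDerivAt_neg 0)).deriv
      simpa [Function.comp_def] using this
    rw [h1] at h2
    linarith
  -- χ'(T) = 0 by periodicity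
  have hderivT : deriv χ T = 0 := by
    have h1 : (fun t => χ (t + T)) = χ := funext hχper
    have h2 : deriv (fun t => χ (t + T)) 0 = deriv χ T := by
      have := (((hχd (0+T)).hasDerivAt.comp 0 (by simpa using (hasDerivAt_id (0:ℝ)).add_const T : HasDerivAt (fun s : ℝ => s + T) 1 0))).deriv
      simpa [zero_add, Function.comp_def] using this
    rw [h1, hderiv0] at h2
    exact h2.symm
  -- FTC with g t = cos(T−t) χ'(t) − sin(T−t) χ(t)
  set g : ℝ → ℝ := fun t => Real.cos (T - t) * deriv χ t - Real.sin (T - t) * χ t with hg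
  have hgderiv : ∀ t : ℝ, HasDerivAt g (Real.cos (T - t) * x t) t := by
    intro t
    have hlin : HasDerivAt (fun s : ℝ => T - s) (-1) t := by
      simpa [Pi.sub_def] using (hasDerivAt_const t T).sub (hasDerivAt_id t)
    have hcos : HasDerivAt (fun s => Real.cos (T - s)) (Real.sin (T - t)) t := by
      have := (Real.hasDerivAt_cos (T - t)).comp t hlin
      simpa [Function.comp_def] using this
    have hsinD : HasDerivAt (fun s => Real.sin (T - s)) (-Real.cos (T - t)) t := by
      have := (Real.hasDerivAt_sin (T - t)).comp t hlin
      simpa [Function.comp_def] using this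
    have h1 : HasDerivAt (fun s => Real.cos (T - s) * deriv χ s)
        (Real.sin (T - t) * deriv χ t + Real.cos (T - t) * deriv (deriv χ) t) t :=
      hcos.mul (hχ'd t).hasDerivAt
    have h2 : HasDerivAt (fun s => Real.sin (T - s) * χ s)
        (-Real.cos (T - t) * χ t + Real.sin (T - t) * deriv χ t) t :=
      hsinD.mul (hχd t).hasDerivAt
    have := h1.sub h2
    have heq : Real.sin (T - t) * deriv χ t + Real.cos (T - t) * deriv (deriv χ) t -
        (-Real.cos (T - t) * χ t + Real.sin (T - t) * deriv χ t)
        = Real.cos (T - t) * x t := by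
      rw [← hode t]; ring
    rw [heq] at this
    exact this
  have hint : IntervalIntegrable (fun t => Real.cos (T - t) * x t) MeasureTheory.volume 0 T :=
    ((Real.continuous_cos.comp (continuous_const.sub continuous_id)).mul hx).intervalIntegrable 0 T
  have hFTC : (∫ t in (0:ℝ)..T, Real.cos (T - t) * x t) = g T - g 0 :=
    intervalIntegral.integral_eq_sub_of_hasDerivAt (fun t _ => hgderiv t) hint
  have hgT : g T = 0 := by simp [hg, hderivT]
  have hg0 : g 0 = -Real.sin T * χ 0 := by simp [hg, hderiv0]
  rw [hFTC, hgT, hg0]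
  field_simp
  ring
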